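/- For any tree T of order n(T) ≥ 3 with maximum degree Δ(T) and s(T) support vertices, γ^t_StR(T) ≥ ⌈(n(T)+s(T))/Δ(T)⌉ + 1. -/
import Mathlib
set_option linter.unusedSectionVars false


open Finset

variable {V : Type*} [Fintype V]

/-- The degree of a vertex. -/
noncomputable def degN (G : SimpleGraph V) (v : V) : ℕ := {u | G.Adj v u}.ncard

/-- Maximum degree. -/
noncomputable def maxDeg (G : SimpleGraph V) : ℕ := Finset.univ.sup (degN G)

/-- Minimum degree. -/
noncomputable def minDeg (G : SimpleGraph V) : ℕ := sInf {d | ∃ v, degN G v = d}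

/-- No isolated vertex. -/
def NoIsolated (G : SimpleGraph V) : Prop := ∀ v, ∃ u, G.Adj v u

/-- Total strong Roman dominating function. `(Δ+1)/2 = ⌈Δ/2⌉` and
`(m+1)/2 = ⌈m/2⌉` in natural-number arithmetic. -/
def IsTSRDF (G : SimpleGraph V) (f : V → ℕ) : Prop :=
  (∀ v, f v ≤ (maxDeg G + 1) / 2 + 1) ∧
  (∀ v, f v = 0 → ∃ u, G.Adj v u ∧
      1 + ({w | G.Adj u w ∧ f w = 0}.ncard + 1) / 2 ≤ f u) ∧
  (∀ v, 0 < f v → ∃ u, G.Adj v u ∧ 0 < f u)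

/-- The total strong Roman domination number. -/
noncomputable def tsrd (G : SimpleGraph V) : ℕ :=
  sInf {k | ∃ f : V → ℕ, IsTSRDF G f ∧ ∑ v, f v = k}

lemma degN_eq_degree (G : SimpleGraph V) [DecidableRel G.Adj] (v : V) : degN G v = G.degree v := by
  rw [← SimpleGraph.card_neighborSet_eq_degree, ← Nat.card_eq_fintype_card]
  rfl

lemma exists_adj_conn {G : SimpleGraph V} (hc : G.Connected) (hn : 2 ≤ Fintype.card V) (v : V) :
    ∃ u, G.Adj v u := by
  obtain ⟨u, hu⟩ := Fintype.exists_ne_of_one_lt_card (by omega) v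
  obtain ⟨p⟩ := hc.preconnected v u
  cases p with
  | nil => exact absurd rfl hu
  | cons h _ => exact ⟨_, h⟩

lemma walk_two {G : SimpleGraph V} {v l : V}
    (hv : ∀ w, G.Adj v w → w = l) (hl : ∀ w, G.Adj l w → w = v) :
    ∀ {a b : V}, G.Walk a b → (a = v ∨ a = l) → (b = v ∨ b = l) := by
  intro a b p
  induction p with
  | nil => exact id
  | cons h p ih =>
    intro hab
    apply ih
    rcases hab with rfl | rfl
    · right; exact hv _ h
    · left; exact hl _ h


lemma deg_le_maxDeg (G : SimpleGraph V) [DecidableRel G.Adj] (v : V) :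
    G.degree v ≤ maxDeg G := by
  rw [← degN_eq_degree]; exact Finset.le_sup (mem_univ v)

lemma two_le_maxDeg (G : SimpleGraph V) (ht : G.IsTree) (hn : 3 ≤ Fintype.card V) :
    2 ≤ maxDeg G := by
  classical
  by_contra h
  push_neg at h
  have h1 : ∑ v, G.degree v = 2 * (Fintype.card V - 1) := by
    have ha := SimpleGraph.sum_degrees_eq_twice_card_edges G
    have hb := ht.card_edgeFinset
    omega
  have h2 : ∑ v, G.degree v ≤ ∑ _v : V, 1 := by
    refine Finset.sum_le_sum fun v _ => ?_
    have := deg_le_maxDeg G v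
    omega
  simp [Finset.card_univ] at h2
  omega

/-- unique neighbor of a degree-one vertex -/
lemma unique_nbr {G : SimpleGraph V} [DecidableRel G.Adj] {l x w : V}
    (hd : G.degree l = 1) (hx : G.Adj l x) (hw : G.Adj l w) : w = x := by
  obtain ⟨y, hy⟩ := Finset.card_eq_one.1 hd
  have h1 : x ∈ G.neighborFinset l := by rwa [SimpleGraph.mem_neighborFinset]
  have h2 : w ∈ G.neighborFinset l := by rwa [SimpleGraph.mem_neighborFinset]
  rw [hy, Finset.mem_singleton] at h1 h2
  rw [h1, h2]

lemma supp_card_bound (G : SimpleGraph V) [DecidableRel G.Adj] [DecidableEq V]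
    (ht : G.IsTree) (hn : 3 ≤ Fintype.card V) :
    (univ.filter (fun v => ∃ u, G.Adj v u ∧ degN G u = 1)).card + 2 ≤ Fintype.card V := by
  set n := Fintype.card V
  set Supp := univ.filter (fun v => ∃ u, G.Adj v u ∧ degN G u = 1) with hSupp
  set L := univ.filter (fun v => G.degree v = 1) with hL
  -- no support vertex is a leaf
  have hdisj : ∀ v ∈ Supp, v ∉ L := by
    intro v hv hvL
    rw [hSupp, mem_filter] at hv
    rw [hL, mem_filter] at hvL
    obtain ⟨_, l, hadj, hdl⟩ := hv
    rw [degN_eq_degree] at hdl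
    have hdv := hvL.2
    have hNv : ∀ w, G.Adj v w → w = l := fun w hw => unique_nbr hdv hadj hw
    have hNl : ∀ w, G.Adj l w → w = v := fun w hw => unique_nbr hdl hadj.symm hw
    have hex : ∃ x : V, x ≠ v ∧ x ≠ l := by
      by_contra hc
      push_neg at hc
      have hsub : (univ : Finset V) ⊆ {v, l} := by
        intro x _
        rcases eq_or_ne x v with rfl | hxv
        · exact mem_insert_self _ _
        · simp [hc x hxv]
      have := Finset.card_le_card hsub
      have h2 : ({v, l} : Finset V).card ≤ 2 :=
        le_trans (Finset.card_insert_le _ _) (by simp)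
      simp [Finset.card_univ] at this
      omega
    obtain ⟨x, hxv, hxl⟩ := hex
    obtain ⟨p⟩ := ht.isConnected.preconnected v x
    rcases walk_two hNv hNl p (Or.inl rfl) with rfl | rfl
    · exact hxv rfl
    · exact hxl rfl
  -- at least two leaves
  have hiso : ∀ v : V, 1 ≤ G.degree v := by
    intro v
    obtain ⟨u, hu⟩ := exists_adj_conn ht.isConnected (by omega) v
    have : 0 < G.degree v := by
      rw [← SimpleGraph.card_neighborSet_eq_degree]
      exact Fintype.card_pos_iff.2 ⟨⟨u, hu⟩⟩
    omega
  have hsumdeg : ∑ v, G.degree v = 2 * (n - 1) := by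
    have h1 := SimpleGraph.sum_degrees_eq_twice_card_edges G
    have h2 := ht.card_edgeFinset
    omega
  have hsum2 : ∑ v : V, (if G.degree v = 1 then 1 else 2) ≤ ∑ v, G.degree v := by
    refine Finset.sum_le_sum fun v _ => ?_
    have := hiso v
    split <;> omega
  have hsplit : ∑ v : V, (if G.degree v = 1 then 1 else 2)
      = L.card * 1 + (univ.filter (fun v => ¬ G.degree v = 1)).card * 2 := by
    rw [Finset.sum_ite, Finset.sum_const, Finset.sum_const]
    simp [hL, mul_comm]
  have hcards := Finset.card_filter_add_card_filter_not
    (s := (univ : Finset V)) (p := fun v => G.degree v = 1)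
  rw [← hL] at hcards
  simp only [Finset.card_univ] at hcards
  have hL2 : 2 ≤ L.card := by omega
  -- disjoint union
  have hdisj' : Disjoint Supp L := Finset.disjoint_left.2 hdisj
  have := Finset.card_le_card (Finset.subset_univ (Supp ∪ L))
  rw [Finset.card_union_of_disjoint hdisj', Finset.card_univ] at this
  omega

lemma ncard_eq_card_filter (p : V → Prop) [DecidablePred p] :
    {x | p x}.ncard = (univ.filter p).card := by
  rw [← Set.ncard_coe_finset]; congr 1; ext x; simp

lemma deg_le_maxDeg2 (G : SimpleGraph V) [DecidableRel G.Adj] (v : V) :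
    G.degree v ≤ maxDeg G := by
  rw [← degN_eq_degree]; exact Finset.le_sup (mem_univ v)

lemma main_bound (G : SimpleGraph V) [DecidableRel G.Adj] [DecidableEq V]
    (ht : G.IsTree) (hn : 3 ≤ Fintype.card V) (f : V → ℕ) (hf : IsTSRDF G f) :
    Fintype.card V + (univ.filter (fun v => ∃ u, G.Adj v u ∧ degN G u = 1)).card + maxDeg G
      ≤ maxDeg G * ∑ v, f v := by
  classical
  obtain ⟨hub, hdef, htot⟩ := hf
  set n := Fintype.card V with hn'
  set Δ := maxDeg G with hΔ'
  have hΔ2 : 2 ≤ Δ := two_le_maxDeg G ht hn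
  set Supp := univ.filter (fun v => ∃ u, G.Adj v u ∧ degN G u = 1) with hSupp
  set A := univ.filter (fun u => f u ≠ 0) with hA
  set Z := univ.filter (fun u => f u = 0) with hZ
  set d0 : V → ℕ := fun u => (univ.filter (fun w => G.Adj u w ∧ f w = 0)).card with hd0
  have hdef' : ∀ v, f v = 0 → ∃ u, G.Adj v u ∧ 1 + (d0 u + 1) / 2 ≤ f u := by
    intro v hv
    obtain ⟨u, h1, h2⟩ := hdef v hv
    refine ⟨u, h1, ?_⟩
    rwa [ncard_eq_card_filter] at h2
  have hdegΔ : ∀ v, G.degree v ≤ Δ := fun v => deg_le_maxDeg2 G v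
  have hmemA : ∀ u, u ∈ A ↔ f u ≠ 0 := by intro u; simp [hA]
  have hd01 : ∀ u ∈ A, d0 u + 1 ≤ Δ := by
    intro u hu
    obtain ⟨p, hp, hfp⟩ := htot u (Nat.pos_of_ne_zero ((hmemA u).1 hu))
    have hpn : p ∉ univ.filter (fun w => G.Adj u w ∧ f w = 0) := by
      simp only [mem_filter]
      rintro ⟨-, -, h⟩
      omega
    have hsub : insert p (univ.filter (fun w => G.Adj u w ∧ f w = 0)) ⊆ G.neighborFinset u := by
      intro w hw
      rcases Finset.mem_insert.1 hw with rfl | hw'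
      · rwa [SimpleGraph.mem_neighborFinset]
      · rw [SimpleGraph.mem_neighborFinset]
        exact ((mem_filter.1 hw').2).1
    have h1 := Finset.card_le_card hsub
    rw [Finset.card_insert_of_notMem hpn] at h1
    calc d0 u + 1 ≤ (G.neighborFinset u).card := h1
    _ ≤ Δ := hdegΔ u
  have hSuppA : Supp ⊆ A := by
    intro v hv
    rw [hSupp, mem_filter] at hv
    obtain ⟨-, l, hadj, hdl⟩ := hv
    rw [degN_eq_degree] at hdl
    rw [hmemA]
    intro hfv
    have key : ∀ u, G.Adj l u → f u ≠ 0 → False := by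
      intro u hu hfu
      have h := unique_nbr hdl hadj.symm hu
      rw [h] at hfu
      exact hfu hfv
    rcases Nat.eq_zero_or_pos (f l) with hl0 | hlpos
    · obtain ⟨u, h1, h2⟩ := hdef' l hl0
      exact key u h1 (by omega)
    · obtain ⟨u, h1, h2⟩ := htot l hlpos
      exact key u h1 (by omega)
  have hs2 : Supp.card + 2 ≤ n := supp_card_bound G ht hn
  set Dp : V → Prop := fun u => 1 + (d0 u + 1) / 2 ≤ f u with hDp
  set d0' : V → ℕ := fun u => if Dp u then d0 u else 0 with hd0'
  set sig : V → ℕ := fun u => if u ∈ Supp then 1 else 0 with hsig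
  have hzbound : Z.card ≤ ∑ u ∈ A, d0' u := by
    have hsub : Z ⊆ (A.filter Dp).biUnion
        (fun u => univ.filter (fun w => G.Adj u w ∧ f w = 0)) := by
      intro v hv
      rw [hZ, mem_filter] at hv
      obtain ⟨u, h1, h2⟩ := hdef' v hv.2
      refine Finset.mem_biUnion.2 ⟨u, ?_, ?_⟩
      · exact mem_filter.2 ⟨(hmemA u).2 (by omega), h2⟩
      · exact mem_filter.2 ⟨mem_univ _, h1.symm, hv.2⟩
    calc Z.card ≤ ((A.filter Dp).biUnion
        (fun u => univ.filter (fun w => G.Adj u w ∧ f w = 0))).card :=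
      Finset.card_le_card hsub
    _ ≤ ∑ u ∈ A.filter Dp, d0 u := Finset.card_biUnion_le
    _ = ∑ u ∈ A, d0' u := by rw [Finset.sum_filter]
  have hcount : Z.card + A.card = n := by
    have h := Finset.card_filter_add_card_filter_not
      (s := (univ : Finset V)) (p := fun u => f u = 0)
    rw [← hZ] at h
    rw [Finset.card_univ] at h
    have h2 : univ.filter (fun u => ¬ f u = 0) = A := by rw [hA]
    rw [h2] at h
    exact h
  have hscount : Supp.card = ∑ u ∈ A, sig u := by
    have h1 : A.filter (fun u => u ∈ Supp) = Supp := by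
      ext x
      simp only [mem_filter]
      exact ⟨fun h => h.2, fun h => ⟨hSuppA h, h⟩⟩
    calc Supp.card = ∑ _x ∈ Supp, 1 := by rw [Finset.card_eq_sum_ones]
    _ = ∑ x ∈ A.filter (fun u => u ∈ Supp), 1 := by rw [h1]
    _ = ∑ u ∈ A, sig u := by rw [Finset.sum_filter, hsig]
  have hsumf : ∑ u ∈ A, f u = ∑ v, f v := by
    rw [hA]; exact Finset.sum_filter_ne_zero univ
  have hf1 : ∀ u ∈ A, 1 ≤ f u := fun u hu => Nat.pos_of_ne_zero ((hmemA u).1 hu)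
  have hDle : ∀ u, Dp u → d0 u + 2 ≤ 2 * f u := by
    intro u h
    have h' : 1 + (d0 u + 1) / 2 ≤ f u := h
    omega
  have hsig1 : ∀ u, sig u ≤ 1 := by
    intro u; simp only [hsig]; split <;> omega
  have hterm : ∀ u ∈ A, d0' u + 1 + sig u ≤ Δ * f u := by
    intro u hu
    have h1 := hf1 u hu
    have hs1 := hsig1 u
    by_cases hD : Dp u
    · have h2 : d0 u + 2 ≤ 2 * f u := hDle u hD
      have h3 : d0 u + 1 ≤ Δ := hd01 u hu
      have h4 : d0' u = d0 u := by simp only [hd0', if_pos hD]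
      rcases Nat.lt_or_ge (f u) 2 with h5 | h5
      · have h6 : f u = 1 := by omega
        have h7 : Δ * f u = Δ := by rw [h6, mul_one]
        omega
      · have h6 : Δ * 2 ≤ Δ * f u := Nat.mul_le_mul_left Δ h5
        omega
    · have h4 : d0' u = 0 := by simp only [hd0', if_neg hD]
      have h6 : Δ * 1 ≤ Δ * f u := Nat.mul_le_mul_left Δ h1
      omega
  rcases Finset.eq_empty_or_nonempty Z with hZe | hZne
  · have hZ0 : Z.card = 0 := by rw [hZe]; rfl
    have hfn : n ≤ ∑ u ∈ A, f u := by
      calc n = A.card := by omega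
      _ = ∑ _u ∈ A, 1 := by rw [Finset.card_eq_sum_ones]
      _ ≤ ∑ u ∈ A, f u := Finset.sum_le_sum hf1
    have e2 : 2 * (n - 1) ≤ Δ * (n - 1) := Nat.mul_le_mul_right _ hΔ2
    have e1 : Δ * (n - 1) + Δ = Δ * n := by
      rw [← Nat.mul_succ]; congr 1; omega
    have e3 : Δ * n ≤ Δ * ∑ u ∈ A, f u := Nat.mul_le_mul_left _ hfn
    rw [← hsumf]
    omega
  · obtain ⟨v0, hv0⟩ := hZne
    have hv0z : f v0 = 0 := by
      rw [hZ, mem_filter] at hv0; exact hv0.2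
    obtain ⟨u0, hadj0, hle0⟩ := hdef' v0 hv0z
    have hu0A : u0 ∈ A := (hmemA u0).2 (by omega)
    have hDp0 : Dp u0 := hle0
    have hd0pos : 1 ≤ d0 u0 := by
      have hm : v0 ∈ univ.filter (fun w => G.Adj u0 w ∧ f w = 0) :=
        mem_filter.2 ⟨mem_univ _, hadj0.symm, hv0z⟩
      have := Finset.card_pos.2 ⟨v0, hm⟩
      simpa [hd0] using this
    have hfu02 : 2 ≤ f u0 := by
      have := hDle u0 hDp0; omega
    have hd0'u0 : d0' u0 = d0 u0 := by simp only [hd0', if_pos hDp0]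
    have key : (∑ u ∈ A, (d0' u + 1 + sig u)) + Δ ≤ ∑ u ∈ A, Δ * f u := by
      by_cases hgood : d0' u0 + 1 + sig u0 + Δ ≤ Δ * f u0
      · have e3 : (∑ x ∈ A.erase u0, (d0' x + 1 + sig x)) + (d0' u0 + 1 + sig u0)
            = ∑ u ∈ A, (d0' u + 1 + sig u) := Finset.sum_erase_add _ _ hu0A
        have e4 : (∑ x ∈ A.erase u0, Δ * f x) + Δ * f u0 = ∑ u ∈ A, Δ * f u :=
          Finset.sum_erase_add _ _ hu0A
        have h3 : ∑ x ∈ A.erase u0, (d0' x + 1 + sig x) ≤ ∑ x ∈ A.erase u0, Δ * f x :=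
          Finset.sum_le_sum fun x hx => hterm x (Finset.mem_of_mem_erase hx)
        omega
      · by_cases hx : ∃ v ∈ A, v ≠ u0 ∧ d0' v + 1 + sig v + 1 ≤ Δ * f v
        · obtain ⟨w, hwA, hwne, hw⟩ := hx
          have hw' : w ∈ A.erase u0 := Finset.mem_erase.2 ⟨hwne, hwA⟩
          have e1 : (∑ x ∈ (A.erase u0).erase w, (d0' x + 1 + sig x)) + (d0' w + 1 + sig w)
              = ∑ x ∈ A.erase u0, (d0' x + 1 + sig x) := Finset.sum_erase_add _ _ hw'
          have e2 : (∑ x ∈ (A.erase u0).erase w, Δ * f x) + Δ * f w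
              = ∑ x ∈ A.erase u0, Δ * f x := Finset.sum_erase_add _ _ hw'
          have e3 : (∑ x ∈ A.erase u0, (d0' x + 1 + sig x)) + (d0' u0 + 1 + sig u0)
              = ∑ u ∈ A, (d0' u + 1 + sig u) := Finset.sum_erase_add _ _ hu0A
          have e4 : (∑ x ∈ A.erase u0, Δ * f x) + Δ * f u0 = ∑ u ∈ A, Δ * f u :=
            Finset.sum_erase_add _ _ hu0A
          have h3 : ∑ x ∈ (A.erase u0).erase w, (d0' x + 1 + sig x)
              ≤ ∑ x ∈ (A.erase u0).erase w, Δ * f x :=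
            Finset.sum_le_sum fun x hx =>
              hterm x (Finset.mem_of_mem_erase (Finset.mem_of_mem_erase hx))
          have hs0 := hsig1 u0
          have h5 : d0 u0 + 1 ≤ Δ := hd01 u0 hu0A
          have h6 : Δ * 2 ≤ Δ * f u0 := Nat.mul_le_mul_left Δ hfu02
          omega
        · exfalso
          push_neg at hx
          have hA1 : ∀ v ∈ A, v ≠ u0 → f v = 1 ∧ v ∈ Supp ∧ Δ ≤ 2 ∧ d0' v = 0 := by
            intro v hv hne
            have h7 := hx v hv hne
            have h8 : d0 v + 1 ≤ Δ := hd01 v hv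
            have hsgv := hsig1 v
            have h9 : 1 ≤ f v := hf1 v hv
            have hd'v : d0' v ≤ d0 v := by
              simp only [hd0']; split <;> omega
            have hfv1 : f v = 1 := by
              by_contra hc
              have h10 : 2 ≤ f v := by omega
              have h11 : Δ * 2 ≤ Δ * f v := Nat.mul_le_mul_left Δ h10
              omega
            have hd'0 : d0' v = 0 := by
              simp only [hd0']
              split
              · have := hDle v (by assumption)
                omega
              · rfl
            have h12 : Δ * f v = Δ := by rw [hfv1, mul_one]
            have hsv : v ∈ Supp := by
              by_contra hns
              have : sig v = 0 := by simp only [hsig, if_neg hns]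
              omega
            have hsv1 : sig v = 1 := by simp only [hsig, if_pos hsv]
            exact ⟨hfv1, hsv, by omega, hd'0⟩
          have hu0S : u0 ∈ Supp := by
            by_contra hns
            have hs0 : sig u0 = 0 := by simp only [hsig, if_neg hns]
            have h5 : d0 u0 + 1 ≤ Δ := hd01 u0 hu0A
            have h6 : Δ * 2 ≤ Δ * f u0 := Nat.mul_le_mul_left Δ hfu02
            exact hgood (by omega)
          have hAS : A ⊆ Supp := by
            intro v hv
            rcases eq_or_ne v u0 with rfl | hne
            · exact hu0S
            · exact (hA1 v hv hne).2.1
          have hcard2 : A.card ≤ Supp.card := Finset.card_le_card hAS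
          obtain ⟨p, hpadj, hppos⟩ := htot u0 (by omega)
          have hpA : p ∈ A := (hmemA p).2 (by omega)
          have hpne : p ≠ u0 := fun h => by
            rw [h] at hpadj
            exact G.irrefl hpadj
          have hΔeq : Δ = 2 := le_antisymm (hA1 p hpA hpne).2.2.1 hΔ2
          have hzb2 : Z.card ≤ d0 u0 := by
            have e3 := Finset.sum_erase_add A d0' hu0A
            have hz0 : ∑ u ∈ A.erase u0, d0' u = 0 :=
              Finset.sum_eq_zero fun v hv =>
                (hA1 v (Finset.mem_of_mem_erase hv) (Finset.mem_erase.1 hv).1).2.2.2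
            omega
          have h5 : d0 u0 + 1 ≤ Δ := hd01 u0 hu0A
          omega
    have hsplitsum : ∑ u ∈ A, (d0' u + 1 + sig u)
        = (∑ u ∈ A, d0' u) + A.card + ∑ u ∈ A, sig u := by
      rw [Finset.sum_add_distrib, Finset.sum_add_distrib, Finset.sum_const, smul_eq_mul, mul_one]
    have hmul : ∑ u ∈ A, Δ * f u = Δ * ∑ u ∈ A, f u := by
      rw [Finset.mul_sum]
    rw [← hsumf]
    omega

theorem stmt18 (G : SimpleGraph V) (ht : G.IsTree) (hn : 3 ≤ Fintype.card V) :
    (Fintype.card V + {v | ∃ u, G.Adj v u ∧ degN G u = 1}.ncard + maxDeg G - 1)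
        / maxDeg G + 1 ≤ tsrd G := by
  classical
  have hΔ2 : 2 ≤ maxDeg G := two_le_maxDeg G ht hn
  have hne : {k | ∃ f : V → ℕ, IsTSRDF G f ∧ ∑ v, f v = k}.Nonempty := by
    refine ⟨∑ _v : V, ((maxDeg G + 1) / 2 + 1),
      fun _ => (maxDeg G + 1) / 2 + 1, ⟨fun v => le_refl _, fun v hv => absurd hv (Nat.succ_ne_zero _), ?_⟩, rfl⟩
    intro v _
    obtain ⟨u, hu⟩ := exists_adj_conn ht.isConnected (by omega) v
    exact ⟨u, hu, Nat.succ_pos _⟩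
  have hmem : tsrd G ∈ {k | ∃ f : V → ℕ, IsTSRDF G f ∧ ∑ v, f v = k} := by
    rw [tsrd]
    exact Nat.sInf_mem hne
  obtain ⟨f, hf, hsum⟩ := hmem
  have hmain := main_bound G ht hn f hf
  rw [hsum] at hmain
  rw [ncard_eq_card_filter]
  have hpos : 0 < maxDeg G := by omega
  have hlt : (Fintype.card V + (univ.filter (fun v => ∃ u, G.Adj v u ∧ degN G u = 1)).card
      + maxDeg G - 1) / maxDeg G < tsrd G := by
    rw [Nat.div_lt_iff_lt_mul hpos]
    have hcomm : tsrd G * maxDeg G = maxDeg G * tsrd G := mul_comm _ _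
    omega
  exact hlt
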